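/- For every β > 0 there exists α > 0 (explicitly any α with (2/3)·2^{3/2}α³ + 12·2^{1/2}α < β/2) such that: if y_n > β, 0 < 1 − |θ̂'|² + x < 2α², x < α², and |θ̂'| < 2, then y_n − (2/3)(1+x−|θ̂'|²)^{3/2} − 3(1+x−|θ̂'|²)^{1/2}|θ̂'|² > β/2 > 0. -/

import Mathlib

/-- For every `β > 0` and any `α > 0` with `(2/3)·2^{3/2}α³ + 12·2^{1/2}α < β/2`:
if `y_n > β`, `0 < 1 − |θ̂'|² + x < 2α²`, `x < α²`, and `|θ̂'| < 2`, then
`y_n − (2/3)(1+x−|θ̂'|²)^{3/2} − 3(1+x−|θ̂'|²)^{1/2}|θ̂'|² > β/2 > 0`. -/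
theorem stmt12 (β : ℝ) (hβ : 0 < β) (α : ℝ) (hα : 0 < α)
    (hcond : 2/3 * 2 ^ ((3:ℝ)/2) * α^3 + 12 * 2 ^ ((1:ℝ)/2) * α < β/2) :
    ∀ yn x a : ℝ, β < yn → 0 ≤ x → x < α^2 →
      0 < 1 - a^2 + x → 1 - a^2 + x < 2 * α^2 → 0 ≤ a → a < 2 →
      β/2 < yn - 2/3 * (1 + x - a^2) ^ ((3:ℝ)/2)
        - 3 * (1 + x - a^2) ^ ((1:ℝ)/2) * a^2 ∧ (0:ℝ) < β/2 := by
  intro yn x a hyn hx hxα hZpos hZlt ha ha2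
  have hZeq : 1 + x - a^2 = 1 - a^2 + x := by ring
  rw [hZeq]
  set Z := 1 - a^2 + x with hZdef
  have h32 : Z ^ ((3:ℝ)/2) < 2 ^ ((3:ℝ)/2) * α^3 := by
    calc Z ^ ((3:ℝ)/2) < (2*α^2) ^ ((3:ℝ)/2) :=
          Real.rpow_lt_rpow hZpos.le hZlt (by norm_num)
      _ = 2 ^ ((3:ℝ)/2) * α^3 := by
          rw [Real.mul_rpow (by norm_num) (sq_nonneg α), ← Real.rpow_natCast α 2,
            ← Real.rpow_mul hα.le]
          norm_num
  have h12 : Z ^ ((1:ℝ)/2) < 2 ^ ((1:ℝ)/2) * α := by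
    calc Z ^ ((1:ℝ)/2) < (2*α^2) ^ ((1:ℝ)/2) :=
          Real.rpow_lt_rpow hZpos.le hZlt (by norm_num)
      _ = 2 ^ ((1:ℝ)/2) * α := by
          rw [Real.mul_rpow (by norm_num) (sq_nonneg α), ← Real.rpow_natCast α 2,
            ← Real.rpow_mul hα.le]
          norm_num
  have hB0 : 0 < Z ^ ((1:ℝ)/2) := Real.rpow_pos_of_pos hZpos _
  have ha4 : a^2 < 4 := by nlinarith
  refine ⟨?_, by linarith⟩
  nlinarith [mul_pos hB0 (mul_pos hB0 hB0), sq_nonneg a,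
    mul_le_mul_of_nonneg_right h12.le (sq_nonneg a), hα, ha4]
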